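/- Let Q be a real quadratic form on R^(ℓ+1) with eigenvalues λ₀ ≤ λ₁ ≤ ... ≤ λ_ℓ (of its symmetric matrix) and index j (number of negative eigenvalues). Then the set {y ∈ S^ℓ : Q(y) ≥ 0} is homotopy equivalent to a sphere of dimension ℓ − j. -/

import Mathlib

open scoped BigOperators

private lemma quadratic_eigen_expansion {N : ℕ} (M : Matrix (Fin N) (Fin N) ℝ) (hM : M.IsHermitian)
    (y : EuclideanSpace ℝ (Fin N)) :
    ∑ a, ∑ b, M a b * y a * y b =
      ∑ i, hM.eigenvalues i * (hM.eigenvectorBasis.repr y i) ^ 2 := by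
  set b := hM.eigenvectorBasis with hb
  set x := b.repr y with hx
  have hy : y = ∑ i, x i • (b i : EuclideanSpace ℝ (Fin N)) := (b.sum_repr y).symm
  have hya : ∀ a, y a = ∑ i, x i * (b i) a := by
    intro a; conv_lhs => rw [hy]
    simp [WithLp.ofLp_sum, Finset.sum_apply]
  have hMb : ∀ i a, ∑ c, M a c * (b i) c = hM.eigenvalues i * (b i) a := by
    intro i a
    have := congrFun (hM.mulVec_eigenvectorBasis i) a
    simpa [Matrix.mulVec, dotProduct] using this
  have hinner : ∀ i k, ∑ a, (b i) a * (b k) a = if i = k then 1 else 0 := by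
    intro i k
    have := orthonormal_iff_ite.mp b.orthonormal i k
    simpa [PiLp.inner_apply, RCLike.inner_apply, conj_trivial, mul_comm] using this
  have hMy : ∀ a, ∑ c, M a c * y c = ∑ i, x i * (hM.eigenvalues i * (b i) a) := by
    intro a
    calc ∑ c, M a c * y c = ∑ c, ∑ i, x i * (M a c * (b i) c) := by
          refine Finset.sum_congr rfl fun c _ => ?_
          rw [hya c, Finset.mul_sum]
          exact Finset.sum_congr rfl fun i _ => by ring
      _ = ∑ i, x i * ∑ c, M a c * (b i) c := by
          rw [Finset.sum_comm]
          exact Finset.sum_congr rfl fun i _ => (Finset.mul_sum _ _ _).symm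
      _ = _ := by
          exact Finset.sum_congr rfl fun i _ => by rw [hMb i a]
  calc ∑ a, ∑ c, M a c * y a * y c
      = ∑ a, y a * ∑ c, M a c * y c := by
        refine Finset.sum_congr rfl fun a _ => ?_
        rw [Finset.mul_sum]
        exact Finset.sum_congr rfl fun c _ => by ring
    _ = ∑ a, ∑ k, ∑ i, (x k * (b k) a) * (x i * (hM.eigenvalues i * (b i) a)) := by
        refine Finset.sum_congr rfl fun a _ => ?_
        rw [hMy a, hya a, Finset.sum_mul]
        exact Finset.sum_congr rfl fun k _ => Finset.mul_sum _ _ _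
    _ = ∑ k, ∑ i, (x k * x i * hM.eigenvalues i) * ∑ a, (b k) a * (b i) a := by
        rw [Finset.sum_comm]
        refine Finset.sum_congr rfl fun k _ => ?_
        rw [Finset.sum_comm]
        refine Finset.sum_congr rfl fun i _ => ?_
        rw [Finset.mul_sum]
        exact Finset.sum_congr rfl fun a _ => by ring
    _ = ∑ k, ∑ i, (x k * x i * hM.eigenvalues i) * (if k = i then 1 else 0) := by
        refine Finset.sum_congr rfl fun k _ => Finset.sum_congr rfl fun i _ => ?_
        rw [hinner k i]
    _ = ∑ i, hM.eigenvalues i * x i ^ 2 := by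
        simp [Finset.sum_ite_eq, mul_comm]
        exact Finset.sum_congr rfl fun i _ => by ring
    _ = ∑ i, hM.eigenvalues i * (b.repr y i) ^ 2 := rfl


section model

variable {N m : ℕ} (lam : Fin N → ℝ)

private lemma sum_split (f : Fin N → ℝ) :
    ∑ i, f i = (∑ s : {i : Fin N // lam i < 0}, f s) +
      ∑ s : {i : Fin N // ¬ lam i < 0}, f s := by
  classical
  rw [← Equiv.sum_comp (Equiv.sumCompl (fun i => lam i < 0)) f, Fintype.sum_sum_type]
  rfl

private lemma sum_sq_ext (e : Fin (m + 1) ≃ {i : Fin N // ¬ lam i < 0})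
    (u : EuclideanSpace ℝ (Fin (m + 1))) :
    ∑ i, (if h : lam i < 0 then (0:ℝ) else u (e.symm ⟨i, h⟩)) ^ 2 = ∑ k, u k ^ 2 := by
  classical
  rw [sum_split lam]
  have h1 : (∑ s : {i : Fin N // lam i < 0},
      (if h : lam (s:Fin N) < 0 then (0:ℝ) else u (e.symm ⟨s, h⟩)) ^ 2) = 0 := by
    refine Finset.sum_eq_zero fun s _ => ?_
    rw [dif_pos s.2]; ring
  have h2 : (∑ s : {i : Fin N // ¬ lam i < 0},
      (if h : lam (s:Fin N) < 0 then (0:ℝ) else u (e.symm ⟨s, h⟩)) ^ 2) = ∑ k, u k ^ 2 := by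
    rw [← Equiv.sum_comp e.symm (fun k => u k ^ 2)]
    refine Finset.sum_congr rfl fun s _ => ?_
    rw [dif_neg s.2]
  rw [h1, h2, zero_add]

/-- Extension by zero as a linear isometry. -/
private noncomputable def extIsom (e : Fin (m + 1) ≃ {i : Fin N // ¬ lam i < 0}) :
    EuclideanSpace ℝ (Fin (m + 1)) →ₗᵢ[ℝ] EuclideanSpace ℝ (Fin N) where
  toLinearMap :=
    { toFun := fun u => (WithLp.toLp 2 (fun i => if h : lam i < 0 then 0 else u (e.symm ⟨i, h⟩)) :
        EuclideanSpace ℝ (Fin N))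
      map_add' := by
        intro u v; ext i
        by_cases h : lam i < 0 <;> simp [h, PiLp.add_apply]
      map_smul' := by
        intro c u; ext i
        by_cases h : lam i < 0 <;> simp [h, PiLp.smul_apply] }
  norm_map' := by
    intro u
    rw [EuclideanSpace.norm_eq, EuclideanSpace.norm_eq]
    congr 1
    calc ∑ i, ‖(if h : lam i < 0 then (0:ℝ) else u (e.symm ⟨i, h⟩))‖ ^ 2
        = ∑ i, (if h : lam i < 0 then (0:ℝ) else u (e.symm ⟨i, h⟩)) ^ 2 := by
          refine Finset.sum_congr rfl fun i _ => ?_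
          rw [Real.norm_eq_abs, sq_abs]
      _ = ∑ k, u k ^ 2 := sum_sq_ext lam e u
      _ = ∑ k, ‖u k‖ ^ 2 := by
          refine Finset.sum_congr rfl fun k _ => ?_
          rw [Real.norm_eq_abs, sq_abs]

/-- The "sphere in the nonnegative eigenspace" is homeomorphic to the standard sphere. -/
private noncomputable def modelHomeo (e : Fin (m + 1) ≃ {i : Fin N // ¬ lam i < 0}) :
    (Metric.sphere (0 : EuclideanSpace ℝ (Fin (m + 1))) 1) ≃ₜ
      {x : EuclideanSpace ℝ (Fin N) | ‖x‖ = 1 ∧ ∀ i, lam i < 0 → x i = 0} := by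
  classical
  set ψ := extIsom lam e with hψ
  have hψ_apply : ∀ (u : EuclideanSpace ℝ (Fin (m + 1))) (i : Fin N),
      ψ u i = if h : lam i < 0 then 0 else u (e.symm ⟨i, h⟩) := fun u i => rfl
  let π : EuclideanSpace ℝ (Fin N) →ₗ[ℝ] EuclideanSpace ℝ (Fin (m + 1)) :=
    { toFun := fun x => (WithLp.toLp 2 (fun k => x (e k)) : EuclideanSpace ℝ (Fin (m + 1)))
      map_add' := by intro u v; ext k; simp [PiLp.add_apply]
      map_smul' := by intro c u; ext k; simp [PiLp.smul_apply] }
  have hπc : Continuous π := π.continuous_of_finiteDimensional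
  refine Homeomorph.mk (Equiv.mk ?_ ?_ ?_ ?_) ?_ ?_
  · exact fun u => ⟨ψ u, by
      constructor
      · rw [ψ.norm_map]
        simpa using mem_sphere_zero_iff_norm.mp u.2
      · intro i hi
        rw [hψ_apply, dif_pos hi]⟩
  · refine fun x => ⟨π x.1, ?_⟩
    rw [mem_sphere_zero_iff_norm]
    have h1 : ∑ k, (x.1 (e k)) ^ 2 = ∑ i, (x.1 i) ^ 2 := by
      rw [Equiv.sum_comp e (fun s : {i : Fin N // ¬ lam i < 0} => x.1 s ^ 2)]
      rw [sum_split lam (fun i => x.1 i ^ 2)]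
      have : (∑ s : {i : Fin N // lam i < 0}, x.1 s ^ 2) = 0 :=
        Finset.sum_eq_zero fun s _ => by rw [x.2.2 s s.2]; ring
      rw [this, zero_add]
    have : ‖π x.1‖ = ‖x.1‖ := by
      rw [EuclideanSpace.norm_eq, EuclideanSpace.norm_eq]
      congr 1
      simpa [Real.norm_eq_abs, sq_abs, π] using h1
    rw [this, x.2.1]
  · intro u
    refine Subtype.ext (PiLp.ext fun k => ?_)
    show ψ u.1 (e k) = u.1 k
    rw [hψ_apply, dif_neg (e k).2, Subtype.coe_eta, e.symm_apply_apply]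
  · intro x
    refine Subtype.ext (PiLp.ext fun i => ?_)
    show ψ (π x.1) i = x.1 i
    rw [hψ_apply]
    by_cases h : lam i < 0
    · rw [dif_pos h, x.2.2 i h]
    · rw [dif_neg h]
      show x.1 (e (e.symm ⟨i, h⟩)) = x.1 i
      rw [e.apply_symm_apply]
  · exact (ψ.continuous.comp continuous_subtype_val).subtype_mk _
  · exact (hπc.comp continuous_subtype_val).subtype_mk _


private lemma stepA (lam : Fin N → ℝ) :
    Nonempty (ContinuousMap.HomotopyEquiv
      {x : EuclideanSpace ℝ (Fin N) | ‖x‖ = 1 ∧ 0 ≤ ∑ i, lam i * x i ^ 2}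
      {x : EuclideanSpace ℝ (Fin N) | ‖x‖ = 1 ∧ ∀ i, lam i < 0 → x i = 0}) := by
  classical
  set S := {x : EuclideanSpace ℝ (Fin N) | ‖x‖ = 1 ∧ 0 ≤ ∑ i, lam i * x i ^ 2} with hS
  set T := {x : EuclideanSpace ℝ (Fin N) | ‖x‖ = 1 ∧ ∀ i, lam i < 0 → x i = 0} with hT
  let P : EuclideanSpace ℝ (Fin N) →ₗ[ℝ] EuclideanSpace ℝ (Fin N) :=
    { toFun := fun x => (WithLp.toLp 2 (fun i => if lam i < 0 then 0 else x i) : EuclideanSpace ℝ (Fin N))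
      map_add' := by intro u v; ext i; by_cases h : lam i < 0 <;>
        simp [h, PiLp.add_apply]
      map_smul' := by intro c u; ext i; by_cases h : lam i < 0 <;>
        simp [h, PiLp.smul_apply] }
  have hP_apply : ∀ (x : EuclideanSpace ℝ (Fin N)) i,
      P x i = if lam i < 0 then 0 else x i := fun x i => rfl
  have hPc : Continuous P := P.continuous_of_finiteDimensional
  have hPnorm : ∀ x : EuclideanSpace ℝ (Fin N), ‖P x‖ ≤ ‖x‖ := by
    intro x
    rw [EuclideanSpace.norm_eq, EuclideanSpace.norm_eq]
    refine Real.sqrt_le_sqrt (Finset.sum_le_sum fun i _ => ?_)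
    rw [hP_apply]
    by_cases h : lam i < 0 <;> simp [h] <;> positivity
  have hPne : ∀ x : EuclideanSpace ℝ (Fin N), x ∈ S → P x ≠ 0 := by
    intro x hx hP0
    have hzero : ∀ i, ¬ lam i < 0 → x i = 0 := by
      intro i h
      have := congrFun (congrArg (fun (v : EuclideanSpace ℝ (Fin N)) => (v : Fin N → ℝ)) hP0) i
      simpa [hP_apply, if_neg h] using this
    have hQx : ∑ i, lam i * x i ^ 2 = ∑ s : {i : Fin N // lam i < 0}, lam s * x s ^ 2 := by
      rw [sum_split lam (fun i => lam i * x i ^ 2)]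
      have : (∑ s : {i : Fin N // ¬ lam i < 0}, lam s * x s ^ 2) = 0 :=
        Finset.sum_eq_zero fun s _ => by rw [hzero s s.2]; ring
      rw [this, add_zero]
    have hle : ∀ s : {i : Fin N // lam i < 0}, lam s * x s ^ 2 ≤ 0 :=
      fun s => mul_nonpos_of_nonpos_of_nonneg (le_of_lt s.2) (sq_nonneg _)
    have hsum0 : ∑ s : {i : Fin N // lam i < 0}, lam s * x s ^ 2 = 0 := by
      have h1 : (0:ℝ) ≤ ∑ s : {i : Fin N // lam i < 0}, lam s * x s ^ 2 := hQx ▸ hx.2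
      have h2 : (∑ s : {i : Fin N // lam i < 0}, lam s * x s ^ 2) ≤ 0 :=
        Finset.sum_nonpos fun s _ => hle s
      linarith
    have hzneg : ∀ i, lam i < 0 → x i = 0 := by
      intro i hi
      have := (Finset.sum_eq_zero_iff_of_nonpos (fun s _ => hle s)).mp hsum0
        ⟨i, hi⟩ (Finset.mem_univ _)
      rcases mul_eq_zero.mp this with h | h
      · exact absurd h (ne_of_lt hi)
      · exact (pow_eq_zero_iff two_ne_zero).mp h
    have : x = 0 := by
      ext i
      by_cases h : lam i < 0
      · exact hzneg i h
      · exact hzero i h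
    rw [hS] at hx
    rw [this] at hx
    simpa using hx.1
  -- the homotopy path
  let g : ℝ → EuclideanSpace ℝ (Fin N) → EuclideanSpace ℝ (Fin N) :=
    fun t x => P x + (1 - t) • (x - P x)
  have hg_apply : ∀ t x i, g t x i = if lam i < 0 then (1 - t) * x i else x i := by
    intro t x i
    show P x i + (1 - t) * (x i - P x i) = _
    rw [hP_apply]
    by_cases h : lam i < 0 <;> simp [h] <;> ring
  have hPg : ∀ t x, P (g t x) = P x := by
    intro t x; ext i
    rw [hP_apply, hP_apply, hg_apply]
    by_cases h : lam i < 0 <;> simp [h]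
  have hgpos : ∀ t x, x ∈ S → 0 < ‖g t x‖ := by
    intro t x hx
    have h1 : 0 < ‖P x‖ := norm_pos_iff.mpr (hPne x hx)
    have h2 : ‖P (g t x)‖ ≤ ‖g t x‖ := hPnorm _
    rw [hPg] at h2
    linarith
  have hQg : ∀ t x, 0 ≤ t → t ≤ 1 → x ∈ S → 0 ≤ ∑ i, lam i * (g t x) i ^ 2 := by
    intro t x ht0 ht1 hx
    have : ∑ i, lam i * x i ^ 2 ≤ ∑ i, lam i * (g t x) i ^ 2 := by
      refine Finset.sum_le_sum fun i _ => ?_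
      rw [hg_apply]
      by_cases h : lam i < 0
      · rw [if_pos h]
        have h1 : (lam i * x i ^ 2) ≤ 0 :=
          mul_nonpos_of_nonpos_of_nonneg h.le (sq_nonneg (x i))
        have h2 : t * (t - 2) ≤ 0 :=
          mul_nonpos_of_nonneg_of_nonpos ht0 (by linarith)
        have h3 : 0 ≤ (-(lam i * x i ^ 2)) * (-(t * (t - 2))) := mul_nonneg (neg_nonneg.mpr h1) (neg_nonneg.mpr h2)
        nlinarith [h3]
      · rw [if_neg h]
    exact le_trans hx.2 this
  have hQsmul : ∀ (c : ℝ) (v : EuclideanSpace ℝ (Fin N)),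
      ∑ i, lam i * (c • v) i ^ 2 = c ^ 2 * ∑ i, lam i * v i ^ 2 := by
    intro c v
    rw [Finset.mul_sum]
    refine Finset.sum_congr rfl fun i _ => ?_
    rw [PiLp.smul_apply]
    simp; ring
  -- maps
  have hmem_r : ∀ x : S, (‖P x.1‖⁻¹ • P x.1 : EuclideanSpace ℝ (Fin N)) ∈ T := by
    intro x
    constructor
    · exact norm_smul_inv_norm (𝕜 := ℝ) (hPne x.1 x.2)
    · intro i hi
      rw [PiLp.smul_apply, hP_apply, if_pos hi]
      simp
  have hmem_ι : ∀ y : T, (y.1 : EuclideanSpace ℝ (Fin N)) ∈ S := by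
    intro y
    refine ⟨y.2.1, Finset.sum_nonneg fun i _ => ?_⟩
    by_cases h : lam i < 0
    · rw [y.2.2 i h]; simp
    · push_neg at h
      positivity
  let r : C(S, T) := ⟨fun x => ⟨‖P x.1‖⁻¹ • P x.1, hmem_r x⟩, by
    refine Continuous.subtype_mk ?_ _
    have h1 : Continuous fun x : S => P x.1 := hPc.comp continuous_subtype_val
    exact (h1.norm.inv₀ fun x => norm_ne_zero_iff.mpr (hPne x.1 x.2)).smul h1⟩
  let ι : C(T, S) := ⟨fun y => ⟨y.1, hmem_ι y⟩, continuous_subtype_val.subtype_mk _⟩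
  have hri : r.comp ι = ContinuousMap.id T := by
    refine ContinuousMap.ext fun y => Subtype.ext ?_
    show (‖P y.1‖⁻¹ • P y.1 : EuclideanSpace ℝ (Fin N)) = y.1
    have hPy : P y.1 = y.1 := by
      ext i
      rw [hP_apply]
      by_cases h : lam i < 0
      · rw [if_pos h, y.2.2 i h]
      · rw [if_neg h]
    rw [hPy, y.2.1]
    simp
  -- homotopy from id to ι ∘ r
  let G : unitInterval × S → EuclideanSpace ℝ (Fin N) := fun p => g p.1.1 p.2.1
  have hG : Continuous G := by
    have hx : Continuous fun p : unitInterval × S => (p.2.1 : EuclideanSpace ℝ (Fin N)) :=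
      continuous_subtype_val.comp continuous_snd
    have ht : Continuous fun p : unitInterval × S => (p.1.1 : ℝ) :=
      continuous_subtype_val.comp continuous_fst
    exact ((hPc.comp hx).add (((continuous_const.sub ht)).smul (hx.sub (hPc.comp hx))))
  have hGne : ∀ p : unitInterval × S, G p ≠ 0 :=
    fun p => norm_pos_iff.mp (hgpos p.1.1 p.2.1 p.2.2)
  have hmem_H : ∀ p : unitInterval × S, (‖G p‖⁻¹ • G p : EuclideanSpace ℝ (Fin N)) ∈ S := by
    intro p
    constructor
    · exact norm_smul_inv_norm (𝕜 := ℝ) (hGne p)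
    · rw [hQsmul]
      have := hQg p.1.1 p.2.1 p.1.2.1 p.1.2.2 p.2.2
      positivity
  let H : ContinuousMap.Homotopy (ContinuousMap.id S) (ι.comp r) :=
    { toFun := fun p => ⟨‖G p‖⁻¹ • G p, hmem_H p⟩
      continuous_toFun := by
        refine Continuous.subtype_mk ?_ _
        exact (hG.norm.inv₀ fun p => norm_ne_zero_iff.mpr (hGne p)).smul hG
      map_zero_left := by
        intro x
        refine Subtype.ext ?_
        show (‖G (0, x)‖⁻¹ • G (0, x) : EuclideanSpace ℝ (Fin N)) = x.1
        have hG0 : G (0, x) = x.1 := by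
          show P x.1 + ((1:ℝ) - 0) • (x.1 - P x.1) = x.1
          rw [sub_zero, one_smul, add_sub_cancel]
        rw [hG0, x.2.1]
        simp
      map_one_left := by
        intro x
        refine Subtype.ext ?_
        show (‖G (1, x)‖⁻¹ • G (1, x) : EuclideanSpace ℝ (Fin N)) = ‖P x.1‖⁻¹ • P x.1
        have hG1 : G (1, x) = P x.1 := by
          show P x.1 + ((1:ℝ) - 1) • (x.1 - P x.1) = P x.1
          rw [sub_self, zero_smul, add_zero]
        rw [hG1] }
  exact ⟨{ toFun := r, invFun := ι,
           left_inv := ⟨H.symm⟩,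
           right_inv := hri ▸ ContinuousMap.Homotopic.refl _ }⟩


end model

/-- Let `Q(y) = ⟨M y, y⟩` be a real quadratic form on `ℝ^(ℓ+1)` given by a
symmetric matrix `M` whose index (the number of negative eigenvalues, counted with
multiplicity) is `j ≤ ℓ`.  Then `{y ∈ Sᶫ : Q(y) ≥ 0}` is homotopy equivalent to a sphere of
dimension `ℓ - j`. -/
theorem nonneg_set_of_quadratic_form_on_sphere_htpyEquiv_sphere (ℓ j : ℕ) (hj : j ≤ ℓ)
    (M : Matrix (Fin (ℓ + 1)) (Fin (ℓ + 1)) ℝ) (hM : M.IsHermitian)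
    (hindex : Fintype.card {i // hM.eigenvalues i < 0} = j)
    (Q : EuclideanSpace ℝ (Fin (ℓ + 1)) → ℝ)
    (hQ : ∀ y, Q y = ∑ a, ∑ b, M a b * y a * y b) :
    Nonempty
      (ContinuousMap.HomotopyEquiv
        {y : EuclideanSpace ℝ (Fin (ℓ + 1)) | ‖y‖ = 1 ∧ 0 ≤ Q y}
        (Metric.sphere (0 : EuclideanSpace ℝ (Fin (ℓ - j + 1))) 1)) := by
  classical
  set lam := hM.eigenvalues with hlam
  set c := hM.eigenvectorBasis.repr with hc
  have hkey : ∀ y, Q y = ∑ i, lam i * (c y i) ^ 2 := fun y => by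
    rw [hQ y]; exact quadratic_eigen_expansion M hM y
  have hcard : Fintype.card {i : Fin (ℓ + 1) // ¬ lam i < 0} = (ℓ - j) + 1 := by
    rw [Fintype.card_subtype_compl]
    rw [hindex, Fintype.card_fin]
    omega
  have e : Fin ((ℓ - j) + 1) ≃ {i : Fin (ℓ + 1) // ¬ lam i < 0} :=
    Fintype.equivOfCardEq (by rw [hcard, Fintype.card_fin])
  have h1 : ({y : EuclideanSpace ℝ (Fin (ℓ + 1)) | ‖y‖ = 1 ∧ 0 ≤ Q y} : Type) ≃ₜ
      {x : EuclideanSpace ℝ (Fin (ℓ + 1)) | ‖x‖ = 1 ∧ 0 ≤ ∑ i, lam i * x i ^ 2} :=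
    c.toHomeomorph.subtype (fun y => by
      constructor
      · rintro ⟨hn, hq⟩
        refine ⟨?_, ?_⟩
        · rw [show (c.toHomeomorph y) = c y from rfl, c.norm_map, hn]
        · rw [show (c.toHomeomorph y) = c y from rfl, ← hkey y]; exact hq
      · rintro ⟨hn, hq⟩
        refine ⟨?_, ?_⟩
        · rw [show (c.toHomeomorph y) = c y from rfl, c.norm_map] at hn; exact hn
        · rw [show (c.toHomeomorph y) = c y from rfl, ← hkey y] at hq; exact hq)
  obtain ⟨h2⟩ := stepA lam
  have h3 := modelHomeo lam e
  exact ⟨(h1.toHomotopyEquiv.trans h2).trans h3.symm.toHomotopyEquiv⟩
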